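/- Let 2 < p < ∞. There exists a measurable function g : ℝ² → [0,∞) such that ∫_ℝ ( ∫_ℝ g(s,t)² dt )^{p/2} ds < ∞ (so g defines an element of L^p(ℝ; L²(ℝ))), while ∫_ℝ g(s,t)^p ds = ∞ for every t ≥ 0. Consequently, not every element of L^p(ℝ; L²(ℝ)) is representable by a measurable function from ℝ into L^p(ℝ). -/

import Mathlib

open MeasureTheory Set
open scoped ENNReal NNReal

noncomputable def sawg (p q : ℝ) : ℝ × ℝ → ℝ := fun x =>
  if 0 ≤ x.1 ∧ |x.2 - (2:ℝ) ^ ((⌊x.1⌋ : ℝ)) * (x.1 - (⌊x.1⌋ : ℝ))| ≤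
      (2:ℝ) ^ ((1 - p * q) * (⌊x.1⌋ : ℝ)) then (2:ℝ) ^ (q * (⌊x.1⌋ : ℝ)) else 0

lemma measurable_two_rpow : Measurable fun y : ℝ => (2:ℝ) ^ y := by
  have h : (fun y : ℝ => (2:ℝ) ^ y) = fun y => Real.exp (Real.log 2 * y) :=
    funext fun y => Real.rpow_def_of_pos two_pos y
  rw [h]
  exact (Real.continuous_exp.comp (continuous_const.mul continuous_id)).measurable

lemma measurable_floorcast : Measurable fun s : ℝ => ((⌊s⌋ : ℤ) : ℝ) := by
  have h : (fun s : ℝ => ((⌊s⌋ : ℤ) : ℝ)) = fun s => s - Int.fract s := by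
    funext s; rw [Int.self_sub_fract]
  rw [h]; exact measurable_id.sub measurable_fract

lemma sawg_measurable (p q : ℝ) : Measurable (sawg p q) := by
  classical
  have hnf : Measurable fun x : ℝ × ℝ => ((⌊x.1⌋ : ℤ) : ℝ) :=
    measurable_floorcast.comp measurable_fst
  have h1 : Measurable fun x : ℝ × ℝ => (2:ℝ) ^ (q * (⌊x.1⌋ : ℝ)) :=
    measurable_two_rpow.comp (measurable_const.mul hnf)
  have hset : MeasurableSet {x : ℝ × ℝ | 0 ≤ x.1 ∧
      |x.2 - (2:ℝ) ^ ((⌊x.1⌋ : ℝ)) * (x.1 - (⌊x.1⌋ : ℝ))| ≤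
        (2:ℝ) ^ ((1 - p * q) * (⌊x.1⌋ : ℝ))} := by
    apply (measurableSet_le measurable_const measurable_fst).inter
    exact measurableSet_le
      ((measurable_snd.sub ((measurable_two_rpow.comp hnf).mul (measurable_fst.sub hnf))).abs)
      (measurable_two_rpow.comp (measurable_const.mul hnf))
  exact Measurable.ite hset h1 measurable_const

lemma sawg_nonneg (p q : ℝ) (x : ℝ × ℝ) : 0 ≤ sawg p q x := by
  unfold sawg
  split
  · positivity
  · exact le_rfl

lemma floor_cast_eq {n : ℕ} {s : ℝ} (hs : s ∈ Ico (n:ℝ) ((n:ℝ)+1)) : ((⌊s⌋ : ℤ) : ℝ) = n := by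
  have h : ⌊s⌋ = (n : ℤ) := by
    rw [Int.floor_eq_iff]
    · exact ⟨by exact_mod_cast hs.1, by push_cast; exact hs.2⟩
  exact_mod_cast h

lemma sawg_inner (p q : ℝ) (hpq : 2*q - p*q = -2) (n : ℕ) (s : ℝ)
    (hs : s ∈ Ico (n:ℝ) ((n:ℝ)+1)) :
    (∫⁻ t : ℝ, (ENNReal.ofReal (sawg p q (s, t))) ^ 2)
      = ENNReal.ofReal ((2:ℝ) ^ (1 - (n:ℝ))) := by
  have hfl : ((⌊s⌋ : ℤ) : ℝ) = n := floor_cast_eq hs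
  have hs0 : (0:ℝ) ≤ s := le_trans (Nat.cast_nonneg n) hs.1
  set c : ℝ := (2:ℝ) ^ ((n:ℝ)) * (s - n) with hc
  set h : ℝ := (2:ℝ) ^ ((1 - p * q) * (n:ℝ)) with hh
  have hcongr : (fun t : ℝ => (ENNReal.ofReal (sawg p q (s, t))) ^ 2)
      = (Icc (c - h) (c + h)).indicator
          (fun _ => (ENNReal.ofReal ((2:ℝ) ^ (q * (n:ℝ)))) ^ 2) := by
    funext t
    have hcond : (0 ≤ s ∧ |t - c| ≤ h) ↔ t ∈ Icc (c - h) (c + h) := by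
      rw [Set.mem_Icc, abs_le]
      constructor
      · rintro ⟨-, h1, h2⟩; constructor <;> linarith
      · rintro ⟨h1, h2⟩; exact ⟨hs0, by constructor <;> linarith⟩
    by_cases ht : t ∈ Icc (c - h) (c + h)
    · rw [Set.indicator_of_mem ht]
      have : sawg p q (s, t) = (2:ℝ) ^ (q * (n:ℝ)) := by
        unfold sawg; rw [hfl, if_pos (hcond.mpr ht)]
      rw [this]
    · rw [Set.indicator_of_notMem ht]
      have : sawg p q (s, t) = 0 := by
        unfold sawg; rw [hfl, if_neg (fun hx => ht (hcond.mp hx))]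
      rw [this]; simp
  rw [hcongr, lintegral_indicator_const measurableSet_Icc, Real.volume_Icc]
  have h2 : c + h - (c - h) = 2 * h := by ring
  rw [h2, ← ENNReal.ofReal_pow (by positivity), ← ENNReal.ofReal_mul (by positivity)]
  congr 1
  have e1 : ((2:ℝ) ^ (q * (n:ℝ))) ^ (2:ℕ) = (2:ℝ) ^ (q * (n:ℝ) * 2) := by
    rw [← Real.rpow_natCast ((2:ℝ) ^ (q * (n:ℝ))) 2, ← Real.rpow_mul (by norm_num)]
    norm_num
  rw [e1, hh]
  have e2 : (2:ℝ) * (2:ℝ) ^ ((1 - p * q) * (n:ℝ)) = (2:ℝ) ^ (1 + (1 - p * q) * (n:ℝ)) := by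
    rw [Real.rpow_add two_pos, Real.rpow_one]
  rw [e2, ← Real.rpow_add two_pos]
  congr 1
  linear_combination (n:ℝ) * hpq

lemma iUnion_Ico_nat_real : Ici (0:ℝ) = ⋃ n : ℕ, Ico (n:ℝ) ((n:ℝ)+1) := by
  ext s
  simp only [mem_Ici, mem_iUnion, mem_Ico]
  constructor
  · intro h0
    have hnn := Int.floor_nonneg.mpr h0
    have hcast : ((⌊s⌋.toNat : ℕ) : ℝ) = ((⌊s⌋ : ℤ) : ℝ) := by
      exact_mod_cast congrArg (fun z : ℤ => (z : ℝ)) (Int.toNat_of_nonneg hnn)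
    exact ⟨⌊s⌋.toNat, by rw [hcast]; exact Int.floor_le s,
      by rw [hcast]; exact Int.lt_floor_add_one s⟩
  · rintro ⟨n, h1, _⟩; exact le_trans (Nat.cast_nonneg n) h1

lemma pairwise_disjoint_Ico_nat_real :
    Pairwise (Function.onFun Disjoint fun n : ℕ => Ico (n:ℝ) ((n:ℝ)+1)) := by
  intro m n hmn
  rw [Function.onFun, Set.Ico_disjoint_Ico]
  rcases hmn.lt_or_gt with h | h
  · calc min ((m:ℝ)+1) ((n:ℝ)+1) ≤ (m:ℝ)+1 := min_le_left _ _
      _ ≤ (n:ℝ) := by exact_mod_cast Nat.succ_le_of_lt h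
      _ ≤ max ((m:ℝ)) ((n:ℝ)) := le_max_right _ _
  · calc min ((m:ℝ)+1) ((n:ℝ)+1) ≤ (n:ℝ)+1 := min_le_right _ _
      _ ≤ (m:ℝ) := by exact_mod_cast Nat.succ_le_of_lt h
      _ ≤ max ((m:ℝ)) ((n:ℝ)) := le_max_left _ _

lemma sawg_outer (p q : ℝ) (hp : 2 < p) (hpq : 2*q - p*q = -2) :
    (∫⁻ s : ℝ, (∫⁻ t : ℝ, (ENNReal.ofReal (sawg p q (s, t))) ^ 2) ^ (p / 2)) < ⊤ := by
  set F : ℝ → ℝ≥0∞ :=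
    fun s => (∫⁻ t : ℝ, (ENNReal.ofReal (sawg p q (s, t))) ^ 2) ^ (p / 2) with hF
  set r : ℝ≥0∞ := ENNReal.ofReal ((2:ℝ) ^ (-(p/2))) with hr
  have hp20 : (0:ℝ) < p / 2 := by linarith
  have hFstrip : ∀ n : ℕ, ∀ s ∈ Ico (n:ℝ) ((n:ℝ)+1),
      F s = ENNReal.ofReal ((2:ℝ) ^ (p/2)) * r ^ n := by
    intro n s hs
    rw [hF]
    simp only
    rw [sawg_inner p q hpq n s hs]
    rw [ENNReal.ofReal_rpow_of_pos (Real.rpow_pos_of_pos two_pos _), hr,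
      ← ENNReal.ofReal_pow (by positivity), ← ENNReal.ofReal_mul (by positivity)]
    congr 1
    rw [← Real.rpow_natCast ((2:ℝ) ^ (-(p/2))) n, ← Real.rpow_mul (by norm_num),
      ← Real.rpow_mul (by norm_num), ← Real.rpow_add two_pos]
    congr 1
    ring
  have hF0 : ∀ s : ℝ, s < 0 → F s = 0 := by
    intro s hs
    have hg : ∀ t : ℝ, sawg p q (s, t) = 0 := by
      intro t; unfold sawg
      rw [if_neg]; rintro ⟨h0, -⟩; linarith
    rw [hF]
    simp only [hg, ENNReal.ofReal_zero]
    rw [lintegral_const]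
    simp [ENNReal.zero_rpow_of_pos hp20]
  have hind : F = (Ici (0:ℝ)).indicator F := by
    funext s
    by_cases h : (0:ℝ) ≤ s
    · exact (Set.indicator_of_mem (mem_Ici.mpr h) F).symm
    · rw [hF0 s (lt_of_not_ge h)]
      exact (Set.indicator_of_notMem (by simpa using h) F).symm
  calc (∫⁻ s : ℝ, F s) = ∫⁻ s in Ici (0:ℝ), F s := by
        conv_lhs => rw [hind]
        rw [lintegral_indicator measurableSet_Ici]
    _ = ∑' n : ℕ, ∫⁻ s in Ico (n:ℝ) ((n:ℝ)+1), F s := by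
        rw [iUnion_Ico_nat_real, lintegral_iUnion (fun n => measurableSet_Ico)
          pairwise_disjoint_Ico_nat_real]
    _ = ∑' n : ℕ, ENNReal.ofReal ((2:ℝ) ^ (p/2)) * r ^ n := by
        congr 1; funext n
        rw [setLIntegral_congr_fun measurableSet_Ico
          (hFstrip n), setLIntegral_const, Real.volume_Ico]
        simp
    _ = ENNReal.ofReal ((2:ℝ) ^ (p/2)) * (1 - r)⁻¹ := by
        rw [ENNReal.tsum_mul_left, ENNReal.tsum_geometric]
    _ < ⊤ := by
        apply ENNReal.mul_lt_top ENNReal.ofReal_lt_top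
        rw [lt_top_iff_ne_top, ne_eq, ENNReal.inv_eq_top]
        have hr1 : r < 1 := by
          rw [hr]
          exact ENNReal.ofReal_lt_one.mpr
            (Real.rpow_lt_one_of_one_lt_of_neg one_lt_two (by linarith))
        intro h0
        exact absurd hr1 (not_lt.mpr (tsub_eq_zero_iff_le.mp h0))

lemma sawg_diverge (p q : ℝ) (hq0 : 0 < q) (hpq : 2*q - p*q = -2) (t : ℝ) (ht : 0 ≤ t) :
    (∫⁻ s : ℝ, (ENNReal.ofReal (sawg p q (s, t))) ^ p) = ⊤ := by
  set N : ℕ := ⌈t⌉₊ with hN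
  set K : ℕ → ℝ := fun m => (2:ℝ) ^ ((m:ℝ)) with hK
  set hg : ℕ → ℝ := fun m => (2:ℝ) ^ ((1 - p*q) * (m:ℝ)) with hhg
  set u : ℕ → ℝ := fun m => max (t - hg m) 0 / K m with hu
  set J : ℕ → Set ℝ := fun m => Ico ((m:ℝ) + u m) ((m:ℝ) + u m + hg m / K m) with hJ
  have hK0 : ∀ m, (0:ℝ) < K m := fun m => Real.rpow_pos_of_pos two_pos _
  have hh0 : ∀ m, (0:ℝ) < hg m := fun m => Real.rpow_pos_of_pos two_pos _
  have hpq0 : 0 < p * q := by linarith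
  have hhK : ∀ m, hg m ≤ K m := by
    intro m
    apply Real.rpow_le_rpow_of_exponent_le one_le_two
    have : (0:ℝ) ≤ (m:ℝ) := Nat.cast_nonneg m
    nlinarith
  have hu0 : ∀ m, 0 ≤ u m := fun m => div_nonneg (le_max_right _ _) (hK0 m).le
  have htK : ∀ m : ℕ, N ≤ m → t ≤ K m := by
    intro m hm
    calc t ≤ (N:ℝ) := Nat.le_ceil t
      _ ≤ (m:ℝ) := by exact_mod_cast hm
      _ ≤ K m := by
          rw [hK]; simp only
          rw [Real.rpow_natCast]
          exact_mod_cast (Nat.lt_two_pow_self (n := m)).le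
  have hud : ∀ m : ℕ, N ≤ m → u m + hg m / K m ≤ 1 := by
    intro m hm
    rw [hu]; simp only
    rw [← add_div, div_le_one (hK0 m), ← max_add_add_right, sub_add_cancel, zero_add]
    exact max_le (htK m hm) (hhK m)
  have hsub : ∀ m : ℕ, N ≤ m → J m ⊆ Ico (m:ℝ) ((m:ℝ)+1) := by
    intro m hm x hx
    rw [hJ] at hx; simp only [mem_Ico] at hx
    constructor
    · linarith [hu0 m, hx.1]
    · have := hud m hm; linarith [hx.2]
  have hval : ∀ m : ℕ, N ≤ m → ∀ s ∈ J m, sawg p q (s, t) = (2:ℝ) ^ (q * (m:ℝ)) := by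
    intro m hm s hs
    have hs' : s ∈ Ico (m:ℝ) ((m:ℝ)+1) := hsub m hm hs
    have hfl : ((⌊s⌋ : ℤ) : ℝ) = m := floor_cast_eq hs'
    have hs0 : (0:ℝ) ≤ s := le_trans (Nat.cast_nonneg m) hs'.1
    rw [hJ] at hs; simp only [mem_Ico] at hs
    have h1 : u m ≤ s - m := by linarith [hs.1]
    have h2 : s - m < u m + hg m / K m := by linarith [hs.2]
    have hKu : K m * u m = max (t - hg m) 0 := by
      rw [hu]; field_simp [(hK0 m).ne']
    have hKd : K m * (hg m / K m) = hg m := by field_simp [(hK0 m).ne']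
    have hup : K m * (s - m) ≥ max (t - hg m) 0 := by
      rw [← hKu]; exact mul_le_mul_of_nonneg_left h1 (hK0 m).le
    have hdown : K m * (s - m) < max (t - hg m) 0 + hg m := by
      calc K m * (s - m) < K m * (u m + hg m / K m) :=
            mul_lt_mul_of_pos_left h2 (hK0 m)
        _ = max (t - hg m) 0 + hg m := by rw [mul_add, hKu, hKd]
    have hmax1 : t - hg m ≤ max (t - hg m) 0 := le_max_left _ _
    have hmax2 : max (t - hg m) 0 ≤ t := max_le (by linarith [hh0 m]) ht
    have habs : |t - K m * (s - m)| ≤ hg m := by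
      rw [abs_le]; constructor <;> [linarith; linarith]
    unfold sawg
    rw [hfl]
    exact if_pos ⟨hs0, habs⟩
  have hint : ∀ m : ℕ, N ≤ m →
      (∫⁻ s in J m, (ENNReal.ofReal (sawg p q (s, t))) ^ p) = 1 := by
    intro m hm
    have hmeas : MeasurableSet (J m) := measurableSet_Ico
    rw [setLIntegral_congr_fun hmeas
      (fun s hs => by simp only [hval m hm s hs] : EqOn (fun s => (ENNReal.ofReal (sawg p q (s, t))) ^ p) (fun _ => (ENNReal.ofReal ((2:ℝ) ^ (q * (m:ℝ)))) ^ p) (J m))]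
    rw [setLIntegral_const, hJ]
    simp only
    rw [Real.volume_Ico]
    have hd : (m:ℝ) + u m + hg m / K m - ((m:ℝ) + u m) = hg m / K m := by ring
    rw [hd, ENNReal.ofReal_rpow_of_pos (Real.rpow_pos_of_pos two_pos _),
      ← ENNReal.ofReal_mul (by positivity)]
    rw [← Real.rpow_mul (by norm_num : (0:ℝ) ≤ 2), hhg, hK]
    simp only
    rw [← Real.rpow_sub two_pos, ← Real.rpow_add two_pos]
    have : q * (m:ℝ) * p + ((1 - p * q) * (m:ℝ) - (m:ℝ)) = 0 := by ring
    rw [this, Real.rpow_zero, ENNReal.ofReal_one]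
  have hdisj : Pairwise (Function.onFun Disjoint fun n : ℕ => J (n + N)) := by
    intro a b hab
    have h := pairwise_disjoint_Ico_nat_real (show a + N ≠ b + N by omega)
    exact Disjoint.mono (hsub (a+N) (Nat.le_add_left N a)) (hsub (b+N) (Nat.le_add_left N b)) h
  refine eq_top_iff.mpr ?_
  calc (⊤:ℝ≥0∞) = ∑' _ : ℕ, (1:ℝ≥0∞) := (ENNReal.tsum_const_eq_top_of_ne_zero one_ne_zero).symm
    _ = ∑' n : ℕ, ∫⁻ s in J (n + N), (ENNReal.ofReal (sawg p q (s, t))) ^ p := by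
        congr 1; funext n; exact (hint (n + N) (Nat.le_add_left N n)).symm
    _ = ∫⁻ s in ⋃ n : ℕ, J (n + N), (ENNReal.ofReal (sawg p q (s, t))) ^ p :=
        (lintegral_iUnion (fun n => measurableSet_Ico) hdisj _).symm
    _ ≤ ∫⁻ s : ℝ, (ENNReal.ofReal (sawg p q (s, t))) ^ p :=
        setLIntegral_le_lintegral _ _

/-- For 2 < p < ∞ there is a nonnegative measurable g on ℝ² with finite
L^p_s(L²_t) norm but with ∫ g(s,t)^p ds = ∞ for every t ≥ 0; hence not every
element of L^p(ℝ; L²(ℝ)) is representable by a measurable L^p-valued function. -/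
theorem exists_nonrepresentable_Lp_L2 (p : ℝ) (hp : 2 < p) :
    ∃ g : ℝ × ℝ → ℝ, Measurable g ∧ (∀ x, 0 ≤ g x) ∧
      (∫⁻ s : ℝ, (∫⁻ t : ℝ, (ENNReal.ofReal (g (s, t))) ^ 2) ^ (p / 2)) < ⊤ ∧
      (∀ t : ℝ, 0 ≤ t → (∫⁻ s : ℝ, (ENNReal.ofReal (g (s, t))) ^ p) = ⊤) := by
  have hp2 : (0:ℝ) < p - 2 := by linarith
  set q : ℝ := 2 / (p - 2) with hq
  have hq0 : 0 < q := by positivity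
  have hpq : 2 * q - p * q = -2 := by
    rw [hq]; field_simp; ring
  exact ⟨sawg p q, sawg_measurable p q, sawg_nonneg p q, sawg_outer p q hp hpq,
    fun t ht => sawg_diverge p q hq0 hpq t ht⟩
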